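/- arXiv:2411.08245 — 2 statements merged into one kernel-verified Lean document; each statement's English description precedes it below -/
import Mathlib

section
/- Let Δ be a pure strongly connected d-dimensional simplicial complex on [n] with a unit interval order, n > d+1, and let j be the smallest vertex appearing in a facet containing n. Then link_Δ(n) equals the (d-1)-skeleton of the simplex on vertex set {j, j+1, ..., n-1}, i.e., its facets are exactly the d-element subsets of {j,...,n-1}. -/
open Finset

/-- A simplicial complex on vertex set `ℕ`, given as the finite family of all of its
faces, closed under taking subsets. -/
def IsComplex (Δ : Finset (Finset ℕ)) : Prop :=
  ∀ F ∈ Δ, ∀ G ⊆ F, G ∈ Δ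

/-- `F` is a facet (maximal face) of `Δ`. -/
def IsFacet (Δ : Finset (Finset ℕ)) (F : Finset ℕ) : Prop :=
  F ∈ Δ ∧ ∀ G ∈ Δ, F ⊆ G → F = G

/-- The finset of facets of `Δ`. -/
def facets (Δ : Finset (Finset ℕ)) : Finset (Finset ℕ) :=
  Δ.filter fun F => ∀ G ∈ Δ, F ⊆ G → F = G

/-- `Δ` is pure of dimension `d`: every facet has `d + 1` vertices. -/
def IsPure (d : ℕ) (Δ : Finset (Finset ℕ)) : Prop :=
  ∀ F, IsFacet Δ F → F.card = d + 1

/-- Dual graph of a pure `d`-dimensional complex: nodes are facets, two facets are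
adjacent iff they share a face with `d` elements (a codimension-one face). -/
def dualGraph (d : ℕ) (Δ : Finset (Finset ℕ)) : SimpleGraph {F // F ∈ facets Δ} :=
  SimpleGraph.fromRel fun F G => ((F : Finset ℕ) ∩ (G : Finset ℕ)).card = d

/-- `Δ` is strongly connected: its dual graph is connected. -/
def StronglyConnected (d : ℕ) (Δ : Finset (Finset ℕ)) : Prop :=
  (dualGraph d Δ).Connected

/-- The labeling of the vertices by `ℕ` is a unit interval order: whenever
`F = {v₀ < v₁ < ⋯ < v_d}` is a facet, every `(d+1)`-element subset of the integer
interval `{v₀, v₀+1, …, v_d}` is a facet. -/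
def UnitIntervalOrder (d : ℕ) (Δ : Finset (Finset ℕ)) : Prop :=
  ∀ F, IsFacet Δ F → ∀ hF : F.Nonempty,
    ∀ S ⊆ Finset.Icc (F.min' hF) (F.max' hF), S.card = d + 1 → IsFacet Δ S

/-- The increasing list of the vertices of a face. -/
def sortedList (F : Finset ℕ) : List ℕ := F.sort (· ≤ ·)

/-- Lexicographic order on faces, comparing the increasing lists of vertices. -/
def faceLexLt (F G : Finset ℕ) : Prop :=
  List.Lex (· < ·) (sortedList F) (sortedList G)

/-- `L` lists exactly the facets of `Δ`, in lexicographic order. -/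
def LexFacetList (Δ : Finset (Finset ℕ)) (L : List (Finset ℕ)) : Prop :=
  L.Nodup ∧ L.toFinset = facets Δ ∧ L.Pairwise faceLexLt

/-- `L` is a shelling order of the pure `d`-dimensional complex `Δ`: it lists the
facets of `Δ` so that for each `k`, the intersection of `⟨L[k+1]⟩` with
`⟨L[0], …, L[k]⟩` is pure of dimension `d - 1`, i.e. it is nonempty and each of
its faces is contained in a common `d`-element face of `L[k+1]` and some earlier
facet. -/
def IsShellingOrder (d : ℕ) (Δ : Finset (Finset ℕ)) (L : List (Finset ℕ)) : Prop :=
  L.Nodup ∧ L.toFinset = facets Δ ∧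
  ∀ (k : ℕ) (hk : k + 1 < L.length),
    (∃ τ ⊆ L.get ⟨k + 1, hk⟩, τ.card = d ∧ ∃ G ∈ L.take (k + 1), τ ⊆ G) ∧
    (∀ σ ⊆ L.get ⟨k + 1, hk⟩, (∃ G ∈ L.take (k + 1), σ ⊆ G) →
      ∃ τ, σ ⊆ τ ∧ τ ⊆ L.get ⟨k + 1, hk⟩ ∧ τ.card = d ∧ ∃ G ∈ L.take (k + 1), τ ⊆ G)

/-- `Δ` is shellable (as a pure `d`-dimensional complex). -/
def Shellable (d : ℕ) (Δ : Finset (Finset ℕ)) : Prop :=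
  ∃ L, IsShellingOrder d Δ L

/-- The link of the vertex `v` in `Δ`. -/
def linkC (Δ : Finset (Finset ℕ)) (v : ℕ) : Finset (Finset ℕ) :=
  Δ.filter fun E => v ∉ E ∧ insert v E ∈ Δ

/-- The deletion of the vertex `v` from `Δ`. -/
def delC (Δ : Finset (Finset ℕ)) (v : ℕ) : Finset (Finset ℕ) :=
  Δ.filter fun E => v ∉ E

/-- Vertex decomposability: `Δ` is a simplex (possibly the void/empty simplex `{∅}`),
or it has a shedding vertex `v` whose link and deletion are vertex decomposable and
such that every facet of the deletion is a facet of `Δ`. -/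
inductive VertexDecomposable : Finset (Finset ℕ) → Prop
  | simplex (V : Finset ℕ) : VertexDecomposable V.powerset
  | shed (Δ : Finset (Finset ℕ)) (v : ℕ) :
      VertexDecomposable (linkC Δ v) → VertexDecomposable (delC Δ v) →
      (∀ F, IsFacet (delC Δ v) F → IsFacet Δ F) → VertexDecomposable Δ

lemma exists_facet_superset (Δ : Finset (Finset ℕ)) (F : Finset ℕ) (hF : F ∈ Δ) :
    ∃ G, IsFacet Δ G ∧ F ⊆ G := by
  obtain ⟨G, hG, hmax⟩ := (Δ.filter fun G => F ⊆ G).exists_max_image Finset.card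
    ⟨F, by simp [hF]⟩
  rw [Finset.mem_filter] at hG
  refine ⟨G, ⟨hG.1, fun G' hG' hGG' => ?_⟩, hG.2⟩
  have : G' ∈ Δ.filter fun G => F ⊆ G := Finset.mem_filter.mpr ⟨hG', hG.2.trans hGG'⟩
  exact Finset.eq_of_subset_of_card_le hGG' (hmax G' this)

theorem stmt5 (n d j : ℕ) (Δ : Finset (Finset ℕ))
    (hC : IsComplex Δ) (hP : IsPure d Δ) (hSC : StronglyConnected d Δ)
    (hU : UnitIntervalOrder d Δ) (hV : Δ.sup id = Finset.Icc 1 n)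
    (hn : d + 1 < n)
    (hj : IsLeast {v : ℕ | ∃ F, IsFacet Δ F ∧ n ∈ F ∧ v ∈ F} j) :
    linkC Δ n = (Finset.Icc j (n - 1)).powerset.filter fun S => S.card ≤ d := by
  obtain ⟨⟨F, hFfac, hnF, hjF⟩, hjlb⟩ := hj
  have hsub : ∀ E ∈ Δ, E ⊆ Finset.Icc 1 n := fun E hE => hV ▸ Finset.le_sup (f := id) hE
  have hFΔ := hFfac.1
  have hFne : F.Nonempty := ⟨n, hnF⟩
  have hjmin : F.min' hFne = j := le_antisymm (Finset.min'_le _ _ hjF)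
    (hjlb ⟨F, hFfac, hnF, Finset.min'_mem _ _⟩)
  have hmaxn : F.max' hFne = n := le_antisymm
    (by have := hsub F hFΔ (F.max'_mem hFne); exact (Finset.mem_Icc.mp this).2)
    (Finset.le_max' _ _ hnF)
  have hFIcc : F ⊆ Finset.Icc j n := by
    rw [← hjmin, ← hmaxn]
    exact fun x hx => Finset.mem_Icc.mpr ⟨Finset.min'_le _ _ hx, Finset.le_max' _ _ hx⟩
  have hcardF : F.card = d + 1 := hP F hFfac
  have hdn : j + d ≤ n := by
    have := Finset.card_le_card hFIcc
    rw [hcardF, Nat.card_Icc] at this; omega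
  have hjn : j ≤ n := by omega
  have key : ∀ S ⊆ Finset.Icc j n, S.card = d + 1 → IsFacet Δ S := by
    intro S hS hSc
    apply hU F hFfac hFne S _ hSc
    rw [hjmin, hmaxn]; exact hS
  ext E
  simp only [linkC, Finset.mem_filter, Finset.mem_powerset]
  constructor
  · rintro ⟨hEΔ, hnE, hins⟩
    obtain ⟨G, hGfac, hEG⟩ := exists_facet_superset Δ _ hins
    have hGcard := hP G hGfac
    have hGIcc : G ⊆ Finset.Icc 1 n := hsub G hGfac.1
    have hnG : n ∈ G := hEG (Finset.mem_insert_self _ _)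
    refine ⟨fun x hx => ?_, ?_⟩
    · have hxG : x ∈ G := hEG (Finset.mem_insert_of_mem hx)
      have hxj : j ≤ x := hjlb ⟨G, hGfac, hnG, hxG⟩
      have hxn : x ≤ n := (Finset.mem_Icc.mp (hGIcc hxG)).2
      have hne : x ≠ n := fun h => hnE (h ▸ hx)
      exact Finset.mem_Icc.mpr ⟨hxj, by omega⟩
    · have hEG' : E ⊆ G.erase n := fun x hx =>
        Finset.mem_erase.mpr ⟨fun h => hnE (h ▸ hx), hEG (Finset.mem_insert_of_mem hx)⟩
      have := Finset.card_le_card hEG'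
      rw [Finset.card_erase_of_mem hnG, hGcard] at this; omega
  · rintro ⟨hEIcc, hEc⟩
    have hIc : d ≤ (Finset.Icc j (n - 1)).card := by rw [Nat.card_Icc]; omega
    obtain ⟨T, hET, hTIcc, hTc⟩ := Finset.exists_subsuperset_card_eq hEIcc hEc hIc
    have hnT : n ∉ T := fun h => by
      have := Finset.mem_Icc.mp (hTIcc h); omega
    have hTfac : IsFacet Δ (insert n T) := by
      apply key
      · intro x hx
        rcases Finset.mem_insert.mp hx with rfl | hx
        · exact Finset.mem_Icc.mpr ⟨hjn, le_rfl⟩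
        · have := Finset.mem_Icc.mp (hTIcc hx); exact Finset.mem_Icc.mpr ⟨this.1, by omega⟩
      · rw [Finset.card_insert_of_notMem hnT, hTc]
    have hinsTΔ : insert n T ∈ Δ := hTfac.1
    have hnE : n ∉ E := fun h => by have := Finset.mem_Icc.mp (hEIcc h); omega
    exact ⟨hC _ hinsTΔ E (hET.trans (Finset.subset_insert _ _)), hnE,
      hC _ hinsTΔ _ (Finset.insert_subset_insert _ hET)⟩
end

section
/- Every pure vertex decomposable simplicial complex is shellable. -/
open Finset

lemma mem_facets' {Δ : Finset (Finset ℕ)} {F : Finset ℕ} : F ∈ facets Δ ↔ IsFacet Δ F := by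
  simp [facets, IsFacet, Finset.mem_filter, and_comm]

lemma exists_facet_above {Δ : Finset (Finset ℕ)} {F : Finset ℕ} (hF : F ∈ Δ) :
    ∃ G, IsFacet Δ G ∧ F ⊆ G := by
  obtain ⟨G, hGS, hmax⟩ := (Δ.filter (F ⊆ ·)).exists_max_image Finset.card
    ⟨F, Finset.mem_filter.mpr ⟨hF, subset_rfl⟩⟩
  rw [Finset.mem_filter] at hGS
  refine ⟨G, ⟨hGS.1, fun H hH hGH => ?_⟩, hGS.2⟩
  exact Finset.eq_of_subset_of_card_le hGH
    (hmax H (Finset.mem_filter.mpr ⟨hH, hGS.2.trans hGH⟩))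

lemma not_mem_take_of_nodup {α : Type*} {L : List α} (h : L.Nodup) {k : ℕ}
    (hk : k < L.length) : L[k] ∉ L.take k := by
  intro hmem
  obtain ⟨i, hi, hEq⟩ := List.getElem_of_mem hmem
  rw [List.length_take] at hi
  rw [List.getElem_take] at hEq
  have : i = k := h.getElem_inj_iff.mp hEq
  omega

lemma shellable_zero (Δ : Finset (Finset ℕ)) (hP : IsPure 0 Δ) : Shellable 0 Δ := by
  refine ⟨(facets Δ).toList, (facets Δ).nodup_toList, Finset.toList_toFinset _, ?_⟩
  set L := (facets Δ).toList with hL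
  intro k hk
  have htne : ∃ G, G ∈ L.take (k + 1) := by
    apply List.exists_mem_of_length_pos
    rw [List.length_take]; omega
  obtain ⟨G0, hG0⟩ := htne
  constructor
  · exact ⟨∅, Finset.empty_subset _, Finset.card_empty, G0, hG0, Finset.empty_subset _⟩
  · intro σ hσ ⟨G, hGt, hσG⟩
    rcases Finset.eq_empty_or_nonempty σ with rfl | hσne
    · exact ⟨∅, subset_rfl, Finset.empty_subset _, Finset.card_empty, G, hGt, Finset.empty_subset _⟩
    · exfalso
      have hFf : L.get ⟨k + 1, hk⟩ ∈ facets Δ := by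
        rw [← Finset.toList_toFinset (facets Δ), ← hL, List.mem_toFinset]
        exact L.get_mem _
      have hGf : G ∈ facets Δ := by
        rw [← Finset.toList_toFinset (facets Δ), ← hL, List.mem_toFinset]
        exact List.take_subset _ _ hGt
      have hFc : (L.get ⟨k + 1, hk⟩).card = 1 := hP _ (mem_facets'.mp hFf)
      have hGc : G.card = 1 := hP _ (mem_facets'.mp hGf)
      have hσF : σ = L.get ⟨k + 1, hk⟩ := by
        apply Finset.eq_of_subset_of_card_le hσ
        rw [hFc]
        exact hσne.card_pos
      have hσG' : σ = G := by
        apply Finset.eq_of_subset_of_card_le hσG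
        rw [hGc]; exact hσne.card_pos
      rw [List.get_eq_getElem] at hσF
      have : L[k+1] ∈ L.take (k+1) := by
        rw [← hσF, hσG']; exact hGt
      exact not_mem_take_of_nodup (Finset.nodup_toList _) hk this


lemma getElem_idx_congr {α : Type*} (L : List α) {i j : ℕ} (h : i = j)
    {hi : i < L.length} {hj : j < L.length} : L[i] = L[j] := by subst h; rfl

theorem stmt7 (d : ℕ) (Δ : Finset (Finset ℕ))
    (hC : IsComplex Δ) (hP : IsPure d Δ) (hVD : VertexDecomposable Δ) :
    Shellable d Δ := by
  induction hVD generalizing d with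
  | simplex V =>
    refine ⟨[V], List.nodup_singleton _, ?_, ?_⟩
    · ext F
      simp only [List.toFinset_cons, List.toFinset_nil, LawfulSingleton.insert_empty_eq,
        Finset.mem_singleton, mem_facets', IsFacet, Finset.mem_powerset]
      constructor
      · rintro rfl
        exact ⟨subset_rfl, fun G hG hVG => subset_antisymm hVG hG⟩
      · rintro ⟨hFV, hmax⟩
        exact hmax V subset_rfl hFV
    · intro k hk
      simp at hk
  | shed Δ v hl hd hf ihl ihd =>
    by_cases hle : linkC Δ v = ∅
    · have hdel : delC Δ v = Δ := by
        ext E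
        simp only [delC, Finset.mem_filter]
        constructor
        · exact fun h => h.1
        · intro hE
          refine ⟨hE, fun hvE => ?_⟩
          have h1 : E.erase v ∈ Δ := hC E hE _ (Finset.erase_subset _ _)
          have h2 : E.erase v ∈ linkC Δ v := by
            simp only [linkC, Finset.mem_filter]
            exact ⟨h1, Finset.notMem_erase _ _, by rwa [Finset.insert_erase hvE]⟩
          rw [hle] at h2
          exact absurd h2 (Finset.notMem_empty _)
      rw [← hdel]
      exact ihd d (by rw [hdel]; exact hC) (by rw [hdel]; exact hP)
    · rcases d with _ | e
      · exact shellable_zero Δ hP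
      have hCd : IsComplex (delC Δ v) := by
        intro F hF G hG
        rw [delC, Finset.mem_filter] at hF ⊢
        exact ⟨hC F hF.1 G hG, fun hv => hF.2 (hG hv)⟩
      have hCl : IsComplex (linkC Δ v) := by
        intro F hF G hG
        rw [linkC, Finset.mem_filter] at hF ⊢
        refine ⟨hC F hF.1 G hG, fun hv => hF.2.1 (hG hv), ?_⟩
        exact hC _ hF.2.2 _ (Finset.insert_subset_insert v hG)
      have key : ∀ G, IsFacet (linkC Δ v) G → IsFacet Δ (insert v G) := by
        intro G hG
        obtain ⟨hGΔ, hvG, hins⟩ := Finset.mem_filter.mp hG.1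
        obtain ⟨H, hHf, hsub⟩ := exists_facet_above hins
        have hvH : v ∈ H := hsub (Finset.mem_insert_self v G)
        have heH : H.erase v ∈ linkC Δ v := by
          rw [linkC, Finset.mem_filter]
          exact ⟨hC H hHf.1 _ (Finset.erase_subset _ _), Finset.notMem_erase _ _,
            by rw [Finset.insert_erase hvH]; exact hHf.1⟩
        have hGe : G ⊆ H.erase v := fun x hx =>
          Finset.mem_erase.mpr ⟨fun h => hvG (h ▸ hx), hsub (Finset.mem_insert_of_mem hx)⟩
        have hGH := hG.2 _ heH hGe
        rw [hGH, Finset.insert_erase hvH]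
        exact hHf
      have hPd : IsPure (e + 1) (delC Δ v) := fun F hF => hP F (hf F hF)
      have hPl : IsPure e (linkC Δ v) := by
        intro G hG
        have h1 := hP _ (key G hG)
        have hvG : v ∉ G := (Finset.mem_filter.mp hG.1).2.1
        rw [Finset.card_insert_of_notMem hvG] at h1
        omega
      obtain ⟨L1, nd1, tf1, sh1⟩ := ihd (e + 1) hCd hPd
      obtain ⟨L2, nd2, tf2, sh2⟩ := ihl e hCl hPl
      have mem1 : ∀ F ∈ L1, IsFacet (delC Δ v) F := by
        intro F hF
        rw [← List.mem_toFinset, tf1, mem_facets'] at hF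
        exact hF
      have mem2 : ∀ G ∈ L2, IsFacet (linkC Δ v) G := by
        intro G hG
        rw [← List.mem_toFinset, tf2, mem_facets'] at hG
        exact hG
      have hv1 : ∀ F ∈ L1, v ∉ F := fun F hF => (Finset.mem_filter.mp (mem1 F hF).1).2
      have hv2 : ∀ G ∈ L2, v ∉ G := fun G hG => (Finset.mem_filter.mp (mem2 G hG).1).2.1
      have hGdel : ∀ G ∈ linkC Δ v, ∃ H ∈ L1, G ⊆ H := by
        intro G hG
        have hGm := Finset.mem_filter.mp hG
        have hGD : G ∈ delC Δ v := by
          rw [delC, Finset.mem_filter]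
          exact ⟨hGm.1, hGm.2.1⟩
        obtain ⟨H, hHf, hsub⟩ := exists_facet_above hGD
        refine ⟨H, ?_, hsub⟩
        rw [← List.mem_toFinset, tf1]
        exact mem_facets'.mpr hHf
      have ndmap : (L2.map (insert v)).Nodup := by
        refine List.Nodup.map_on ?_ nd2
        intro x hx y hy hxy
        have h2 : (insert v x).erase v = (insert v y).erase v := by rw [hxy]
        rwa [Finset.erase_insert (hv2 x hx), Finset.erase_insert (hv2 y hy)] at h2
      have ndL : (L1 ++ L2.map (insert v)).Nodup := by
        rw [List.nodup_append]
        refine ⟨nd1, ndmap, ?_⟩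
        intro F hF1 F' hF2 hFF
        subst hFF
        obtain ⟨G, hG2, rfl⟩ := List.mem_map.mp hF2
        exact hv1 _ hF1 (Finset.mem_insert_self v G)
      have tfL : (L1 ++ L2.map (insert v)).toFinset = facets Δ := by
        ext F
        simp only [List.toFinset_append, Finset.mem_union, List.mem_toFinset, List.mem_map,
          mem_facets']
        constructor
        · rintro (hF1 | ⟨G, hG2, rfl⟩)
          · exact hf F (mem1 F hF1)
          · exact key G (mem2 G hG2)
        · intro hFf
          by_cases hvF : v ∈ F
          · right
            refine ⟨F.erase v, ?_, Finset.insert_erase hvF⟩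
            have hmem : F.erase v ∈ linkC Δ v := by
              rw [linkC, Finset.mem_filter]
              exact ⟨hC F hFf.1 _ (Finset.erase_subset _ _), Finset.notMem_erase _ _,
                by rw [Finset.insert_erase hvF]; exact hFf.1⟩
            have hfacet : IsFacet (linkC Δ v) (F.erase v) := by
              refine ⟨hmem, fun G hG hsub => ?_⟩
              have hGl := Finset.mem_filter.mp hG
              have hFsub : F ⊆ insert v G := by
                intro x hx
                by_cases hxv : x = v
                · exact hxv ▸ Finset.mem_insert_self v G
                · exact Finset.mem_insert_of_mem (hsub (Finset.mem_erase.mpr ⟨hxv, hx⟩))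
              have h3 := hFf.2 _ hGl.2.2 hFsub
              rw [h3, Finset.erase_insert hGl.2.1]
            rw [← List.mem_toFinset, tf2]
            exact mem_facets'.mpr hfacet
          · left
            have hFd : F ∈ delC Δ v := by
              rw [delC, Finset.mem_filter]; exact ⟨hFf.1, hvF⟩
            have hfacet : IsFacet (delC Δ v) F :=
              ⟨hFd, fun G hG hsub => hFf.2 G (Finset.mem_filter.mp hG).1 hsub⟩
            rw [← List.mem_toFinset, tf1]
            exact mem_facets'.mpr hfacet
      refine ⟨L1 ++ L2.map (insert v), ndL, ?_, ?_⟩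
      · exact tfL
      intro k hk
      have hklen : k + 1 < L1.length + L2.length := by
        have h := hk
        rw [List.length_append, List.length_map] at h
        exact h
      by_cases hcase : k + 1 < L1.length
      · have hget : (L1 ++ L2.map (insert v)).get ⟨k + 1, hk⟩ = L1.get ⟨k + 1, hcase⟩ := by
          simp only [List.get_eq_getElem]
          exact List.getElem_append_left hcase
        have htake : (L1 ++ L2.map (insert v)).take (k + 1) = L1.take (k + 1) := by
          rw [List.take_append, Nat.sub_eq_zero_of_le (le_of_lt hcase),
            List.take_zero, List.append_nil]
        rw [hget, htake]
        exact sh1 k hcase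
      · push_neg at hcase
        obtain ⟨j, hj⟩ : ∃ j, k + 1 = L1.length + j := ⟨k + 1 - L1.length, by omega⟩
        have hjlt : j < L2.length := by omega
        have hget : (L1 ++ L2.map (insert v)).get ⟨k + 1, hk⟩
            = insert v (L2.get ⟨j, hjlt⟩) := by
          simp only [List.get_eq_getElem]
          rw [List.getElem_append_right hcase]
          simp only [List.getElem_map]
          exact congrArg (insert v) (getElem_idx_congr L2 (by omega))
        have htake : (L1 ++ L2.map (insert v)).take (k + 1)
            = L1 ++ (L2.take j).map (insert v) := by
          rw [List.take_append, List.take_of_length_le hcase,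
            show k + 1 - L1.length = j from by omega, ← List.map_take]
        rw [hget, htake]
        have hG2 : L2.get ⟨j, hjlt⟩ ∈ L2 := L2.get_mem _
        have hGlink : L2.get ⟨j, hjlt⟩ ∈ linkC Δ v := (mem2 _ hG2).1
        obtain ⟨H0, hH0L1, hGH0⟩ := hGdel _ hGlink
        have hvG : v ∉ L2.get ⟨j, hjlt⟩ := hv2 _ hG2
        have hcardG : (L2.get ⟨j, hjlt⟩).card = e + 1 := hPl _ (mem2 _ hG2)
        constructor
        · rcases Nat.eq_zero_or_pos j with rfl | hjpos
          · exact ⟨_, Finset.subset_insert v _, hcardG, H0,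
              List.mem_append_left _ hH0L1, hGH0⟩
          · obtain ⟨j', rfl⟩ : ∃ j', j = j' + 1 := ⟨j - 1, by omega⟩
            obtain ⟨τ', hτ'G, hτ'card, K, hKt, hτ'K⟩ := (sh2 j' hjlt).1
            have hvτ' : v ∉ τ' := fun h => hvG (hτ'G h)
            exact ⟨insert v τ', Finset.insert_subset_insert v hτ'G,
              by rw [Finset.card_insert_of_notMem hvτ', hτ'card], insert v K,
              List.mem_append_right _ (List.mem_map.mpr ⟨K, hKt, rfl⟩),
              Finset.insert_subset_insert v hτ'K⟩
        · rintro σ hσsub ⟨H, hHmem, hσH⟩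
          by_cases hvσ : v ∈ σ
          · rcases List.mem_append.mp hHmem with hH1 | hHm
            · exact absurd (hσH hvσ) (hv1 H hH1)
            · obtain ⟨H', hH't, rfl⟩ := List.mem_map.mp hHm
              have hjne : j ≠ 0 := by
                rintro rfl
                simp at hH't
              obtain ⟨j', rfl⟩ : ∃ j', j = j' + 1 := ⟨j - 1, by omega⟩
              have hσ'G : σ.erase v ⊆ L2.get ⟨j' + 1, hjlt⟩ := by
                intro x hx
                obtain ⟨hxv, hxσ⟩ := Finset.mem_erase.mp hx
                exact (Finset.mem_insert.mp (hσsub hxσ)).resolve_left hxv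
              have hσ'H' : σ.erase v ⊆ H' := by
                intro x hx
                obtain ⟨hxv, hxσ⟩ := Finset.mem_erase.mp hx
                exact (Finset.mem_insert.mp (hσH hxσ)).resolve_left hxv
              obtain ⟨τ', hστ', hτ'G, hτ'card, K, hKt, hτ'K⟩ :=
                (sh2 j' hjlt).2 (σ.erase v) hσ'G ⟨H', hH't, hσ'H'⟩
              have hvτ' : v ∉ τ' := fun h => hvG (hτ'G h)
              refine ⟨insert v τ', fun x hx => ?_, Finset.insert_subset_insert v hτ'G,
                by rw [Finset.card_insert_of_notMem hvτ', hτ'card], insert v K,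
                List.mem_append_right _ (List.mem_map.mpr ⟨K, hKt, rfl⟩),
                Finset.insert_subset_insert v hτ'K⟩
              by_cases hxv : x = v
              · exact hxv ▸ Finset.mem_insert_self v τ'
              · exact Finset.mem_insert_of_mem (hστ' (Finset.mem_erase.mpr ⟨hxv, hx⟩))
          · have hσG : σ ⊆ L2.get ⟨j, hjlt⟩ := fun x hx =>
              (Finset.mem_insert.mp (hσsub hx)).resolve_left fun h => hvσ (h ▸ hx)
            exact ⟨_, hσG, Finset.subset_insert v _, hcardG, H0,
              List.mem_append_left _ hH0L1, hGH0⟩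
end
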